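/- For any monoid M and any trace monoid M(E,I), every monoid homomorphism f : M(E,I) → M factors uniquely as f = ε_M ∘ f̄ where f̄ : M(E,I) → M(M\{1}, I_M) is a basic homomorphism, I_M = {(μ₁,μ₂) : μ₁ ≠ μ₂ ≠ 1 ≠ μ₁, μ₁μ₂ = μ₂μ₁}, and ε_M is the homomorphism sending each generator μ ∈ M\{1} to μ. -/

import Mathlib

open CategoryTheory

/-- The elementary commutation relation on words generated by an independence relation. -/
def traceRel (E : Type) (I : Set (E × E)) : FreeMonoid E → FreeMonoid E → Prop :=
  fun x y => ∃ a b : E, (a, b) ∈ I ∧ x = FreeMonoid.of a * FreeMonoid.of b ∧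
    y = FreeMonoid.of b * FreeMonoid.of a

/-- The congruence on the free monoid generated by commutation of independent pairs. -/
def traceCon (E : Type) (I : Set (E × E)) : Con (FreeMonoid E) := conGen (traceRel E I)

/-- The trace monoid `M(E,I)`. -/
abbrev TraceMonoid (E : Type) (I : Set (E × E)) : Type := (traceCon E I).Quotient

/-- The canonical projection from words to traces. -/
def trcMk {E : Type} {I : Set (E × E)} : FreeMonoid E →* TraceMonoid E I :=
  (traceCon E I).mk'

/-- The generator of the trace monoid corresponding to an event `e`. -/
def trc {E : Type} {I : Set (E × E)} (e : E) : TraceMonoid E I :=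
  trcMk (FreeMonoid.of e)

/-- `I` is an independence relation: irreflexive and symmetric. -/
structure IsIndep {E : Type} (I : Set (E × E)) : Prop where
  irrefl : ∀ a : E, (a, a) ∉ I
  symm : ∀ a b : E, (a, b) ∈ I → (b, a) ∈ I

/-- A homomorphism of trace monoids is basic if it sends generators to generators or to `1`. -/
def IsBasic {E E' : Type} {I : Set (E × E)} {I' : Set (E' × E')}
    (f : TraceMonoid E I →* TraceMonoid E' I') : Prop :=
  ∀ e : E, (∃ e' : E', f (trc e) = trc e') ∨ f (trc e) = 1

/-- A basic homomorphism preserves independence. -/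
def IsIndepPres {E E' : Type} {I : Set (E × E)} {I' : Set (E' × E')}
    (f : TraceMonoid E I →* TraceMonoid E' I') : Prop :=
  ∀ a b : E, (a, b) ∈ I → f (trc a) ≠ f (trc b) ∨ (f (trc a) = 1 ∧ f (trc b) = 1)

/-- The monoid homomorphism out of a trace monoid induced by a map on generators whose
images commute at independent pairs. -/
def liftHom {E : Type} {I : Set (E × E)} {N : Type*} [Monoid N] (φ : E → N)
    (hφ : ∀ a b : E, (a, b) ∈ I → φ a * φ b = φ b * φ a) : TraceMonoid E I →* N :=
  (traceCon E I).lift (FreeMonoid.lift φ) (by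
    rw [traceCon, Con.conGen_le]
    rintro x y ⟨a, b, hab, rfl, rfl⟩
    rw [Con.ker_rel]
    simp only [map_mul, FreeMonoid.lift_eval_of]
    exact hφ a b hab)

@[simp] theorem liftHom_trc {E : Type} {I : Set (E × E)} {N : Type*} [Monoid N] (φ : E → N)
    (hφ : ∀ a b : E, (a, b) ∈ I → φ a * φ b = φ b * φ a) (e : E) :
    liftHom φ hφ (trc (I := I) e) = φ e := by
  show (traceCon E I).lift _ _ ((traceCon E I).mk' (FreeMonoid.of e)) = φ e
  rw [Con.lift_mk']
  simp

theorem trc_comm {E : Type} {I : Set (E × E)} {a b : E} (h : (a, b) ∈ I) :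
    (trc a : TraceMonoid E I) * trc b = trc b * trc a := by
  show trcMk (FreeMonoid.of a) * trcMk (FreeMonoid.of b) =
    trcMk (FreeMonoid.of b) * trcMk (FreeMonoid.of a)
  rw [← map_mul, ← map_mul]
  exact (Con.eq _).2 (ConGen.Rel.of _ _ ⟨a, b, h, rfl, rfl⟩)

theorem isBasic_id {E : Type} {I : Set (E × E)} :
    IsBasic (MonoidHom.id (TraceMonoid E I)) := fun e => Or.inl ⟨e, rfl⟩

theorem isBasic_comp {E₁ E₂ E₃ : Type} {I₁ : Set (E₁ × E₁)} {I₂ : Set (E₂ × E₂)}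
    {I₃ : Set (E₃ × E₃)} {f : TraceMonoid E₁ I₁ →* TraceMonoid E₂ I₂}
    {g : TraceMonoid E₂ I₂ →* TraceMonoid E₃ I₃} (hf : IsBasic f) (hg : IsBasic g) :
    IsBasic (g.comp f) := by
  intro e
  rcases hf e with ⟨e', he⟩ | he
  · rcases hg e' with ⟨e'', he''⟩ | he''
    · exact Or.inl ⟨e'', by simp [MonoidHom.comp_apply, he, he'']⟩
    · exact Or.inr (by simp [MonoidHom.comp_apply, he, he''])
  · exact Or.inr (by simp [MonoidHom.comp_apply, he])

/-- The independence relation `I_M` on `M \ {1}`: distinct commuting non-identity pairs. -/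
def IMon (M : Type) [Monoid M] : Set ({m : M // m ≠ 1} × {m : M // m ≠ 1}) :=
  {p | p.1 ≠ p.2 ∧ (p.1 : M) * (p.2 : M) = (p.2 : M) * (p.1 : M)}

/-- The homomorphism `ε_M : M(M \ {1}, I_M) → M` sending each generator `μ` to `μ`. -/
def epsMon (M : Type) [Monoid M] : TraceMonoid {m : M // m ≠ 1} (IMon M) →* M :=
  liftHom (fun m => m.val) (fun _ _ h => h.2)

theorem traceHom_ext {E : Type} {I : Set (E × E)} {N : Type*} [Monoid N]
    {g h : TraceMonoid E I →* N} (H : ∀ e : E, g (trc e) = h (trc e)) : g = h := by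
  refine MonoidHom.ext fun x => ?_
  obtain ⟨w, rfl⟩ := Con.mk'_surjective x
  show g.comp trcMk w = h.comp trcMk w
  congr 1
  exact FreeMonoid.hom_eq H

@[simp] theorem epsMon_trc {M : Type} [Monoid M] (m : {m : M // m ≠ 1}) :
    epsMon M (trc m) = m.val := liftHom_trc _ _ m

/-- Every monoid homomorphism `f : M(E,I) → M` factors uniquely through `ε_M` by a basic
homomorphism `f̄ : M(E,I) → M(M \ {1}, I_M)`. -/
theorem factor_through_epsMon (M : Type) [Monoid M] (E : Type) (I : Set (E × E))
    (hI : IsIndep I) (f : TraceMonoid E I →* M) :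
    ∃! fbar : TraceMonoid E I →* TraceMonoid {m : M // m ≠ 1} (IMon M),
      IsBasic fbar ∧ (epsMon M).comp fbar = f := by
  classical
  set φ : E → TraceMonoid {m : M // m ≠ 1} (IMon M) := fun e =>
    if h : f (trc e) = 1 then 1 else trc ⟨f (trc e), h⟩ with hφdef
  have hφ : ∀ a b : E, (a, b) ∈ I → φ a * φ b = φ b * φ a := by
    intro a b hab
    by_cases ha : f (trc a) = 1
    · simp [hφdef, ha]
    by_cases hb : f (trc b) = 1
    · simp [hφdef, hb]
    simp only [hφdef, dif_neg ha, dif_neg hb]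
    by_cases heq : f (trc a) = f (trc b)
    · congr 1 <;> simp [heq]
    · refine trc_comm ⟨?_, ?_⟩
      · simp only [ne_eq, Subtype.mk.injEq]; exact heq
      · have := congrArg f (trc_comm (I := I) hab)
        simpa [map_mul] using this
  refine ⟨liftHom φ hφ, ⟨?_, ?_⟩, ?_⟩
  · intro e
    by_cases h : f (trc e) = 1
    · exact Or.inr (by simp [hφdef, h])
    · exact Or.inl ⟨⟨f (trc e), h⟩, by simp [hφdef, h]⟩
  · refine traceHom_ext fun e => ?_
    by_cases h : f (trc e) = 1 <;>
      simp [MonoidHom.comp_apply, hφdef, h]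
  · rintro g ⟨hgb, hgf⟩
    refine traceHom_ext fun e => ?_
    have hge : epsMon M (g (trc e)) = f (trc e) := by
      rw [← hgf]; rfl
    rcases hgb e with ⟨e', he'⟩ | he
    · have hfe : f (trc e) = e'.val := by rw [← hge, he', epsMon_trc]
      have h1 : f (trc e) ≠ 1 := by rw [hfe]; exact e'.property
      rw [he']
      simp only [liftHom_trc, hφdef, dif_neg h1]
      congr 1
      exact Subtype.ext hfe.symm
    · have hfe : f (trc e) = 1 := by rw [← hge, he, map_one]
      rw [he]
      simp [hφdef, hfe]
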